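/- In the Figure 12 system under the monotone model, if v₁ updates first (to r_{v₁} = 3/4) the process stabilizes with final recovery rate r_{v₁} = 3/4, whereas if v₂ updates first the forced sequence v₂ → u₁ → w → v₁ ends with r_{v₁} = 1/2. Hence v₁ obtains its highest possible final recovery rate (3/4 > 1/2) only by being the first bank to report a default. -/
import Mathlib


namespace Fig12

/-- The five banks of the Figure 12 system. -/
inductive Bank | v1 | v2 | u1 | u2 | w
deriving DecidableEq

open Bank

/-- A state: the announced recovery rate of each bank. -/
abbrev St := Bank → ℝ

/-- The paper's recovery-rate function: `R(a,l) = 1` if `a ≥ l`, else `a/l` (so `R(a,0)=1`). -/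
noncomputable def Rfun (a l : ℝ) : ℝ := if a ≥ l then 1 else a / l

/-- Assets: `v₁` receives a debt payment of `3 r_w` from `w` and a CDS payment referencing
`v₂`; `v₂` receives a CDS payment of `4(1 − r_{v₁})` referencing `v₁`; `u₁, u₂` have no
assets; `w` has external assets `3/2`. -/
noncomputable def assets (r : St) : Bank → ℝ
  | v1 => 3 * r w + (1 - r v2)
  | v2 => 4 * (1 - r v1)
  | u1 => 0
  | u2 => 0
  | w  => 3/2

/-- Liabilities: `v₁` owes a debt of 4 (so initially `a/l = 3/4`); `v₂` owes a debt of 1;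
`u₁` owes a CDS referencing `v₂`; `u₂` owes a CDS referencing `v₁`; `w` owes a debt of `3/2`
(to `v₁`) plus a CDS of weight 3 referencing `u₁`. -/
noncomputable def liab (r : St) : Bank → ℝ
  | v1 => 4
  | v2 => 1
  | u1 => 1 - r v2
  | u2 => 1 - r v1
  | w  => 3/2 + 3 * (1 - r u1)

/-- Monotone-model updatability: `b` can update iff its new rate `R(a_b, l_b)` is strictly
below its current rate (recovery rates only decrease in the monotone model). -/
noncomputable def updatable (b : Bank) (r : St) : Prop :=
  Rfun (assets r b) (liab r b) < r b

/-- Updating bank `b`. -/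
noncomputable def upd (b : Bank) (r : St) : St :=
  Function.update r b (Rfun (assets r b) (liab r b))

/-- Sequential reachability. -/
inductive Reach : St → St → Prop
  | refl (r) : Reach r r
  | step (r s : St) (b : Bank) : Reach r s → updatable b s → Reach r (upd b s)

/-- The initial state. -/
def init : St := fun _ => 1

end Fig12

open Fig12 Fig12.Bank

/- Auxiliary explicit states along the two branches. -/
noncomputable def a0 : St := fun b => match b with | v1 => 3/4 | _ => 1
noncomputable def a1 : St := fun b => match b with | v1 => 3/4 | u2 => 0 | _ => 1
noncomputable def b0 : St := fun b => match b with | v2 => 0 | _ => 1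
noncomputable def b1 : St := fun b => match b with | v2 => 0 | u1 => 0 | _ => 1
noncomputable def b2 : St := fun b => match b with | v2 => 0 | u1 => 0 | w => 1/3 | _ => 1
noncomputable def b3 : St := fun b => match b with
  | v1 => 1/2 | v2 => 0 | u1 => 0 | w => 1/3 | _ => 1
noncomputable def b4 : St := fun b => match b with
  | v1 => 1/2 | v2 => 0 | u1 => 0 | u2 => 0 | w => 1/3

lemma upd_v1_init : upd v1 init = a0 := by
  funext c; cases c <;> norm_num [upd, Function.update, a0, init, assets, liab, Rfun] <;> decide

lemma upd_u2_a0 : upd u2 a0 = a1 := by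
  funext c; cases c <;> norm_num [upd, Function.update, a0, a1, assets, liab, Rfun] <;> decide

lemma updA0 : ∀ b, updatable b a0 ↔ b = u2 := by
  intro b; cases b <;> norm_num [updatable, a0, assets, liab, Rfun] <;> decide

lemma updA1 : ∀ b, ¬ updatable b a1 := by
  intro b; cases b <;> norm_num [updatable, a1, assets, liab, Rfun] <;> decide

lemma upd_v2_init : upd v2 init = b0 := by
  funext c; cases c <;> norm_num [upd, Function.update, b0, init, assets, liab, Rfun] <;> decide

lemma upd_u1_b0 : upd u1 b0 = b1 := by
  funext c; cases c <;> norm_num [upd, Function.update, b0, b1, assets, liab, Rfun] <;> decide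

lemma upd_w_b1 : upd w b1 = b2 := by
  funext c; cases c <;> norm_num [upd, Function.update, b1, b2, assets, liab, Rfun] <;> decide

lemma upd_v1_b2 : upd v1 b2 = b3 := by
  funext c; cases c <;> norm_num [upd, Function.update, b2, b3, assets, liab, Rfun] <;> decide

lemma upd_u2_b3 : upd u2 b3 = b4 := by
  funext c; cases c <;> norm_num [upd, Function.update, b3, b4, assets, liab, Rfun] <;> decide

lemma updB0 : ∀ b, updatable b b0 ↔ b = u1 := by
  intro b; cases b <;> norm_num [updatable, b0, assets, liab, Rfun] <;> decide

lemma updB1 : ∀ b, updatable b b1 ↔ b = w := by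
  intro b; cases b <;> norm_num [updatable, b1, assets, liab, Rfun] <;> decide

lemma updB2 : ∀ b, updatable b b2 ↔ b = v1 := by
  intro b; cases b <;> norm_num [updatable, b2, assets, liab, Rfun] <;> decide

lemma updB3 : ∀ b, updatable b b3 ↔ b = u2 := by
  intro b; cases b <;> norm_num [updatable, b3, assets, liab, Rfun] <;> decide

lemma updB4 : ∀ b, ¬ updatable b b4 := by
  intro b; cases b <;> norm_num [updatable, b4, assets, liab, Rfun] <;> decide

lemma reachA : ∀ s, Reach a0 s → s = a0 ∨ s = a1 := by
  intro s h
  induction h with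
  | refl => exact Or.inl rfl
  | step s b _ hb ih =>
    rcases ih with rfl | rfl
    · rw [(updA0 b).mp hb, upd_u2_a0]; exact Or.inr rfl
    · exact absurd hb (updA1 b)

lemma reachB : ∀ s, Reach b0 s →
    s = b0 ∨ s = b1 ∨ s = b2 ∨ s = b3 ∨ s = b4 := by
  intro s h
  induction h with
  | refl => exact Or.inl rfl
  | step s b _ hb ih =>
    rcases ih with rfl | rfl | rfl | rfl | rfl
    · rw [(updB0 b).mp hb, upd_u1_b0]; tauto
    · rw [(updB1 b).mp hb, upd_w_b1]; tauto
    · rw [(updB2 b).mp hb, upd_v1_b2]; tauto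
    · rw [(updB3 b).mp hb, upd_u2_b3]; tauto
    · exact absurd hb (updB4 b)

open Fig12 Fig12.Bank in
theorem stmt19 :
    (∀ b, updatable b init ↔ (b = v1 ∨ b = v2)) ∧
    upd v1 init v1 = 3/4 ∧
    (∀ s, Reach (upd v1 init) s → (∀ b, ¬ updatable b s) → s v1 = 3/4) ∧
    (∃ s, Reach (upd v1 init) s ∧ ∀ b, ¬ updatable b s) ∧
    (∀ b, updatable b (upd v2 init) ↔ b = u1) ∧
    (∀ b, updatable b (upd u1 (upd v2 init)) ↔ b = w) ∧
    (∀ b, updatable b (upd w (upd u1 (upd v2 init))) ↔ b = v1) ∧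
    upd v1 (upd w (upd u1 (upd v2 init))) v1 = 1/2 ∧
    (∀ s, Reach (upd v2 init) s → (∀ b, ¬ updatable b s) → s v1 = 1/2) ∧
    (1/2 : ℝ) < 3/4 := by
  refine ⟨?_, ?_, ?_, ?_, ?_, ?_, ?_, ?_, ?_, by norm_num⟩
  · intro b; cases b <;> norm_num [updatable, init, assets, liab, Rfun] <;> decide
  · rw [upd_v1_init]; norm_num [a0]
  · intro s hs hstable
    rw [upd_v1_init] at hs
    rcases reachA s hs with rfl | rfl
    · exact absurd ((updA0 u2).mpr rfl) (hstable u2)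
    · norm_num [a1]
  · refine ⟨a1, ?_, updA1⟩
    rw [upd_v1_init, ← upd_u2_a0]
    exact Reach.step _ _ _ (Reach.refl _) ((updA0 u2).mpr rfl)
  · rw [upd_v2_init]; exact updB0
  · rw [upd_v2_init, upd_u1_b0]; exact updB1
  · rw [upd_v2_init, upd_u1_b0, upd_w_b1]; exact updB2
  · rw [upd_v2_init, upd_u1_b0, upd_w_b1, upd_v1_b2]; norm_num [b3]
  · intro s hs hstable
    rw [upd_v2_init] at hs
    rcases reachB s hs with rfl | rfl | rfl | rfl | rfl
    · exact absurd ((updB0 u1).mpr rfl) (hstable u1)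
    · exact absurd ((updB1 w).mpr rfl) (hstable w)
    · exact absurd ((updB2 v1).mpr rfl) (hstable v1)
    · exact absurd ((updB3 u2).mpr rfl) (hstable u2)
    · norm_num [b4]
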